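/- Let β = 0, λ > 0, N ≥ 1, ρ₀ ∈ (0,1), and let {f̂_{i,±}}_{1≤i≤N} with f̂_{i,±} ≥ 0, f̂_{i,+} + f̂_{i,-} ≤ 1, be an equilibrium: f̂_{i,0} Σ_{j=1}^N f̂_{j,+} f̂_{j,-} = N ρ₀ f̂_{i,+} f̂_{i,-} for all i, where f̂_{i,0} = 1 - f̂_{i,+} - f̂_{i,-}. If Σ_{j=1}^N f̂_{j,+} f̂_{j,-} > 0, then for every index i with f̂_{i,0} = 0 one has f̂_{i,+} = 1 or f̂_{i,-} = 1; and for every index i with f̂_{i,0} > 0, setting Δ_i = (f̂_{i,+} - f̂_{i,-})/2 and α = (1/(Nρ₀)) Σ_j f̂_{j,+} f̂_{j,-}, one has f̂_{i,±} = √(α² + α + Δ_i²) - α ± Δ_i. -/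

import Mathlib

open Finset

/-- Non-segregated branch of the equilibrium dichotomy for the β = 0 system:
full neighborhoods are monochromatic, and neighborhoods with vacancies follow
the rigid-mixing formula. -/
theorem stmt_18
    (N : ℕ) (hN : 1 ≤ N) (lam ρ0 : ℝ) (hlam : 0 < lam) (hρ0 : ρ0 ∈ Set.Ioo (0:ℝ) 1)
    (fp fm f0 : Fin N → ℝ)
    (hnn : ∀ i, 0 ≤ fp i ∧ 0 ≤ fm i) (hle : ∀ i, fp i + fm i ≤ 1)
    (hf0 : ∀ i, f0 i = 1 - fp i - fm i)
    (heq : ∀ i, f0 i * ∑ j, fp j * fm j = (N:ℝ) * ρ0 * (fp i * fm i))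
    (hpos : 0 < ∑ j, fp j * fm j)
    (α : ℝ) (hα : α = (1 / ((N:ℝ) * ρ0)) * ∑ j, fp j * fm j) :
    ∀ i : Fin N,
      (f0 i = 0 → fp i = 1 ∨ fm i = 1) ∧
      (0 < f0 i →
        fp i = Real.sqrt (α^2 + α + ((fp i - fm i)/2)^2) - α + (fp i - fm i)/2 ∧
        fm i = Real.sqrt (α^2 + α + ((fp i - fm i)/2)^2) - α - (fp i - fm i)/2) := by
  have hN0 : (0:ℝ) < N := by exact_mod_cast hN
  have hNρ : (0:ℝ) < (N:ℝ) * ρ0 := mul_pos hN0 hρ0.1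
  have hαpos : 0 < α := by
    rw [hα]; positivity
  intro i
  constructor
  · intro h0
    have h1 : fp i + fm i = 1 := by have := hf0 i; rw [h0] at this; linarith
    have h2 : fp i * fm i = 0 := by
      have := heq i
      rw [h0, zero_mul] at this
      have := this.symm
      rcases mul_eq_zero.mp this with h | h
      · exact absurd h (ne_of_gt hNρ)
      · exact h
    rcases mul_eq_zero.mp h2 with h | h
    · right; linarith
    · left; linarith
  · intro h0
    have hkey : f0 i * α = fp i * fm i := by
      have h := heq i
      have hS : ∑ j, fp j * fm j = α * ((N:ℝ) * ρ0) := by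
        rw [hα]; field_simp; exact (div_self (ne_of_gt hρ0.1)).symm
      rw [hS] at h
      have : f0 i * α * ((N:ℝ) * ρ0) = fp i * fm i * ((N:ℝ) * ρ0) := by ring_nf; nlinarith [h]
      exact mul_right_cancel₀ (ne_of_gt hNρ) this
    set Δ := (fp i - fm i)/2 with hΔ
    have hm : 0 ≤ (fp i + fm i)/2 + α := by
      have := (hnn i).1; have := (hnn i).2; linarith
    have hsq : α^2 + α + Δ^2 = ((fp i + fm i)/2 + α)^2 := by
      have hfi := hf0 i
      rw [hΔ]
      linear_combination hkey - α * hfi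
    have hsqrt : Real.sqrt (α^2 + α + Δ^2) = (fp i + fm i)/2 + α := by
      rw [hsq, Real.sqrt_sq hm]
    constructor <;> rw [hsqrt] <;> ring
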